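/- Let p be a prime, G a group, and 𝓜 a set of normal subgroups of p-power index in G which is directed (for all M₁, M₂ ∈ 𝓜 there exists M ∈ 𝓜 with M ⊆ M₁ ∩ M₂) and which defines the pro-p topology of G (every normal subgroup of p-power index in G contains some member of 𝓜). Then the inverse limit, over M ∈ 𝓜, of the F_p-vector spaces H₁(M;F_p) = M/([M,M]·M^p), with transition maps induced by the inclusions M' ⊆ M, is the zero module. -/

import Mathlib

open scoped commutatorElement

/-- `H₁(H;F_p)`, realised as `H/([H,H]·H^p)`: the quotient of `H` by the (normal) subgroup
generated by all commutators and all `p`-th powers. -/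
def H1modP (p : ℕ) (H : Type*) [Group H] : Type _ :=
  H ⧸ Subgroup.normalClosure {x : H | (∃ a b : H, x = ⁅a, b⁆) ∨ ∃ a : H, x = a ^ p}

noncomputable instance (p : ℕ) (H : Type*) [Group H] : Group (H1modP p H) :=
  inferInstanceAs (Group (H ⧸ _))

/-- Let `p` be a prime, `G` a group, and `𝓜` a directed set of normal
subgroups of `p`-power index in `G` defining the pro-`p` topology of `G`.  Then the
inverse limit over `M ∈ 𝓜` of the groups `H₁(M;F_p) = M/([M,M]·M^p)`, with transition
maps induced by the inclusions, is zero.  (The limit being zero is expressed via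
representatives: any family of elements `y_M ∈ M` whose classes are compatible under the
transition maps has all classes trivial.) -/
theorem stmt_11 (p : ℕ) (hp : p.Prime) (G : Type*) [Group G] (𝓜 : Set (Subgroup G))
    (hnormal : ∀ M ∈ 𝓜, M.Normal) (hindex : ∀ M ∈ 𝓜, ∃ n : ℕ, M.index = p ^ n)
    (hdir : ∀ M₁ ∈ 𝓜, ∀ M₂ ∈ 𝓜, ∃ M ∈ 𝓜, M ≤ M₁ ⊓ M₂)
    (htop : ∀ N : Subgroup G, N.Normal → (∃ n : ℕ, N.index = p ^ n) → ∃ M ∈ 𝓜, M ≤ N) :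
    ∀ y : ∀ M ∈ 𝓜, M,
      (∀ (M₁ : Subgroup G) (h₁ : M₁ ∈ 𝓜) (M₂ : Subgroup G) (h₂ : M₂ ∈ 𝓜)
        (hle : M₁ ≤ M₂),
        (QuotientGroup.mk (Subgroup.inclusion hle (y M₁ h₁)) : H1modP p M₂) =
          QuotientGroup.mk (y M₂ h₂)) →
      ∀ (M : Subgroup G) (hM : M ∈ 𝓜), (QuotientGroup.mk (y M hM) : H1modP p M) = 1 := by
  intro y hcompat M hM
  haveI hMnormal : M.Normal := hnormal M hM
  haveI : Fact p.Prime := ⟨hp⟩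
  haveI : NeZero p := ⟨hp.ne_zero⟩
  set S : Set M := {x : M | (∃ a b : M, x = ⁅a, b⁆) ∨ ∃ a : M, x = a ^ p} with hS
  set K : Subgroup M := Subgroup.normalClosure S with hK
  -- commutators lie in K
  have hcommK : ∀ a b : M, ⁅a, b⁆ ∈ K := fun a b =>
    Subgroup.subset_normalClosure (Or.inl ⟨a, b, rfl⟩)
  have hpowK : ∀ a : M, a ^ p ∈ K := fun a =>
    Subgroup.subset_normalClosure (Or.inr ⟨a, rfl⟩)
  -- the quotient is a commutative group
  letI : CommGroup (M ⧸ K) :=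
    { (inferInstance : Group (M ⧸ K)) with
      mul_comm := by
        intro a b
        induction a using QuotientGroup.induction_on with
        | H a =>
        induction b using QuotientGroup.induction_on with
        | H b =>
        rw [← QuotientGroup.mk_mul, ← QuotientGroup.mk_mul, QuotientGroup.eq]
        have : (a * b)⁻¹ * (b * a) = ⁅b⁻¹, a⁻¹⁆ := by
          simp [commutatorElement_def]; group
        rw [this]
        exact hcommK _ _ }
  -- and has exponent p, hence is a `ZMod p`-module (additively)
  haveI : Module (ZMod p) (Additive (M ⧸ K)) := AddCommGroup.zmodModule (by
    intro x
    have hq : ∀ q : M ⧸ K, q ^ p = 1 := by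
      intro q
      induction q using QuotientGroup.induction_on with
      | H a =>
      rw [← QuotientGroup.mk_pow, QuotientGroup.eq_one_iff]
      exact hpowK a
    have : (p • x).toMul = 1 := by
      rw [toMul_nsmul]
      exact hq _
    exact this)
  by_contra hne
  have hne' : (QuotientGroup.mk (y M hM) : M ⧸ K) ≠ 1 := hne
  set v : Additive (M ⧸ K) := Additive.ofMul (QuotientGroup.mk (y M hM) : M ⧸ K) with hv
  have hvne : v ≠ 0 := by
    intro h
    exact hne' (ofMul_eq_zero.mp h)
  -- find a linear functional not vanishing on v
  obtain ⟨f, hf⟩ : ∃ f : Module.Dual (ZMod p) (Additive (M ⧸ K)), f v ≠ 0 := by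
    by_contra h
    push_neg at h
    exact hvne ((Module.forall_dual_apply_eq_zero_iff (ZMod p) v).mp h)
  -- the induced function on M
  set ψfun : M → ZMod p := fun m => f (Additive.ofMul (QuotientGroup.mk m : M ⧸ K))
    with hψdef
  have hψmul : ∀ a b : M, ψfun (a * b) = ψfun a + ψfun b := by
    intro a b
    show f (Additive.ofMul (QuotientGroup.mk (a * b) : M ⧸ K)) = _
    rw [QuotientGroup.mk_mul, ofMul_mul, map_add]
  have hψK : ∀ x : M, x ∈ K → ψfun x = 0 := by
    intro x hx
    show f (Additive.ofMul (QuotientGroup.mk x : M ⧸ K)) = 0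
    rw [(QuotientGroup.eq_one_iff x).mpr hx]
    show f 0 = 0
    exact map_zero f
  have hψone : ψfun 1 = 0 := hψK 1 K.one_mem
  -- ψ as a monoid hom into `Multiplicative (ZMod p)`
  set ψ : M →* Multiplicative (ZMod p) :=
    { toFun := fun m => Multiplicative.ofAdd (ψfun m)
      map_one' := by simp [hψone]
      map_mul' := by intro a b; simp [hψmul a b] } with hψ
  -- K is stable under conjugation by elements of G
  have hKconj : ∀ (a : G) (x : M), x ∈ K → (MulAut.conjNormal a : MulAut M) x ∈ K := by
    intro a x hx
    set e := (MulAut.conjNormal a : MulAut M) with he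
    have hmap : K.map e.toMonoidHom ≤ K := by
      have hsurj : Function.Surjective (e.toMonoidHom : M →* M) := e.surjective
      have heq : (Subgroup.normalClosure S).map e.toMonoidHom =
          Subgroup.normalClosure ((e.toMonoidHom : M →* M) '' S) :=
        Subgroup.map_normalClosure S e.toMonoidHom hsurj
      rw [hK, heq]
      apply Subgroup.normalClosure_le_normal
      rintro z ⟨w, hw, rfl⟩
      rcases hw with ⟨u, v, rfl⟩ | ⟨u, rfl⟩
      · exact Subgroup.subset_normalClosure (Or.inl ⟨e u, e v, map_commutatorElement _ _ _⟩)
      · exact Subgroup.subset_normalClosure (Or.inr ⟨e u, map_pow _ _ _⟩)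
    exact hmap ⟨x, hx, rfl⟩
  -- for each a : G, the "twisted" functional
  set χ : G → (M →* Multiplicative (ZMod p)) :=
    fun a => ψ.comp (MulAut.conjNormal a : MulAut M).toMonoidHom with hχdef
  have hχapply : ∀ (a : G) (x : M), χ a x = ψ ((MulAut.conjNormal a : MulAut M) x) :=
    fun a x => rfl
  -- ψ is conjugation-invariant (within M)
  have hψconj : ∀ h x : M, ψ (h * x * h⁻¹) = ψ x := by
    intro h x
    have h1 : h * x * h⁻¹ = ⁅h, x⁆ * x := by group
    have : ψfun (h * x * h⁻¹) = ψfun x := by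
      rw [h1, hψmul, hψK _ (hcommK h x), zero_add]
    show Multiplicative.ofAdd (ψfun (h * x * h⁻¹)) = Multiplicative.ofAdd (ψfun x)
    rw [this]
  -- χ only depends on the coset of a modulo M
  have hχcoset : ∀ (a : G) (m : G), m ∈ M → χ (a * m) = χ a := by
    intro a m hm
    ext x
    have hmul : (MulAut.conjNormal (a * m) : MulAut M) x =
        (MulAut.conjNormal a : MulAut M) ((MulAut.conjNormal m : MulAut M) x) := by
      rw [map_mul]; rfl
    set m' : M := ⟨m, hm⟩ with hm'
    have hconjm : (MulAut.conjNormal m : MulAut M) x = m' * x * m'⁻¹ := by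
      apply Subtype.ext
      rw [MulAut.conjNormal_apply]
      rfl
    have hdecomp : m' * x * m'⁻¹ = ⁅m', x⁆ * x := by group
    rw [hχapply, hχapply, hmul, hconjm, hdecomp, map_mul, map_mul]
    have hc : ψ ((MulAut.conjNormal a : MulAut M) ⁅m', x⁆) = 1 := by
      show Multiplicative.ofAdd (ψfun _) = 1
      rw [hψK _ (hKconj a _ (hcommK m' x))]
      rfl
    rw [hc, one_mul]
  -- the product homomorphism over the (finite) quotient G ⧸ M
  set χbar : G ⧸ M → (M →* Multiplicative (ZMod p)) :=
    fun q => Quotient.liftOn' q χ (by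
      intro a b hab
      have hm : a⁻¹ * b ∈ M := QuotientGroup.leftRel_apply.mp hab
      have : b = a * (a⁻¹ * b) := by group
      rw [this, hχcoset a _ hm]) with hχbar
  have hχbar_mk : ∀ a : G, χbar (QuotientGroup.mk a) = χ a := fun a => rfl
  set Φ : M →* ((G ⧸ M) → Multiplicative (ZMod p)) :=
    Pi.monoidHom (fun q => χbar q) with hΦ
  have hΦmem : ∀ x : M, x ∈ Φ.ker ↔ ∀ a : G, χ a x = 1 := by
    intro x
    constructor
    · intro hx a
      have := congrFun (MonoidHom.mem_ker.mp hx) (QuotientGroup.mk a)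
      exact this
    · intro hx
      rw [MonoidHom.mem_ker]
      funext q
      induction q using QuotientGroup.induction_on with
      | H a => exact hx a
  -- the subgroup N of G
  set N : Subgroup G := Φ.ker.map M.subtype with hN
  have hNleM : N ≤ M := Subgroup.map_subtype_le _
  have hNmem : ∀ g : G, g ∈ N ↔ ∃ hg : g ∈ M, ∀ a : G, χ a ⟨g, hg⟩ = 1 := by
    intro g
    constructor
    · rintro ⟨x, hx, rfl⟩
      exact ⟨x.2, fun a => by
        have := (hΦmem x).mp hx a
        convert this using 2
        rfl⟩
    · rintro ⟨hg, hall⟩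
      exact ⟨⟨g, hg⟩, (hΦmem _).mpr hall, rfl⟩
  -- N is normal in G
  haveI hNnormal : N.Normal := by
    constructor
    intro n hn g
    rw [hNmem] at hn ⊢
    obtain ⟨hnM, hall⟩ := hn
    refine ⟨hMnormal.conj_mem n hnM g, fun a => ?_⟩
    have key : ((MulAut.conjNormal a : MulAut M) ⟨g * n * g⁻¹, hMnormal.conj_mem n hnM g⟩) =
        ((MulAut.conjNormal (a * g) : MulAut M) ⟨n, hnM⟩) := by
      apply Subtype.ext
      rw [MulAut.conjNormal_apply, MulAut.conjNormal_apply]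
      group
    rw [hχapply, key, ← hχapply]
    exact hall (a * g)
  -- index computations
  obtain ⟨n, hMn⟩ := hindex M hM
  have hGMfin : Finite (G ⧸ M) := by
    apply Nat.finite_of_card_ne_zero
    have : Nat.card (G ⧸ M) = M.index := rfl
    rw [this, hMn]
    exact pow_ne_zero n hp.ne_zero
  have hker_index : ∃ k : ℕ, Φ.ker.index = p ^ k := by
    have h1 : Φ.ker.index = Nat.card Φ.range := Subgroup.index_ker Φ
    have h2 : Nat.card Φ.range ∣ Nat.card ((G ⧸ M) → Multiplicative (ZMod p)) :=
      Subgroup.card_subgroup_dvd_card _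
    have h3 : Nat.card ((G ⧸ M) → Multiplicative (ZMod p)) = p ^ (M.index) := by
      rw [Nat.card_fun]
      congr 1
      · rw [Nat.card_congr (Multiplicative.toAdd (α := ZMod p))]
        exact Nat.card_zmod p
    have h4 : Φ.ker.index ∣ p ^ M.index := by rw [h1, ← h3]; exact h2
    obtain ⟨k, _, hk⟩ := (Nat.dvd_prime_pow hp).mp h4
    exact ⟨k, hk⟩
  obtain ⟨k, hk⟩ := hker_index
  have hNindex : ∃ m : ℕ, N.index = p ^ m := by
    refine ⟨k + n, ?_⟩
    have h1 : N.relIndex M * M.index = N.index := Subgroup.relIndex_mul_index hNleM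
    have h2 : N.subgroupOf M = Φ.ker := by
      rw [hN]
      exact Subgroup.comap_map_eq_self_of_injective M.subtype_injective _
    have h3 : N.relIndex M = Φ.ker.index := by
      rw [Subgroup.relIndex, h2]
    rw [← h1, h3, hk, hMn, pow_add]
  -- get a member of 𝓜 inside N
  obtain ⟨M', hM', hM'N⟩ := htop N hNnormal hNindex
  have hM'M : M' ≤ M := le_trans hM'N hNleM
  -- compatibility gives the contradiction
  have hcomp := hcompat M' hM' M hM hM'M
  have heq : ψfun (Subgroup.inclusion hM'M (y M' hM')) = ψfun (y M hM) :=
    congrArg (fun q : M ⧸ K => f (Additive.ofMul q)) hcomp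
  -- the left-hand side vanishes since y M' ∈ M' ≤ N
  have hyN : (↑(y M' hM') : G) ∈ N := hM'N (y M' hM').2
  obtain ⟨hg, hall⟩ := (hNmem _).mp hyN
  have h1 : χ 1 ⟨(↑(y M' hM') : G), hg⟩ = 1 := hall 1
  have hconj1 : (MulAut.conjNormal (1 : G) : MulAut M) ⟨(↑(y M' hM') : G), hg⟩ =
      ⟨(↑(y M' hM') : G), hg⟩ := by
    apply Subtype.ext
    rw [MulAut.conjNormal_apply]
    group
  rw [hχapply, hconj1] at h1
  have hsub : (Subgroup.inclusion hM'M (y M' hM') : M) = ⟨(↑(y M' hM') : G), hg⟩ :=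
    Subtype.ext rfl
  have hzero : ψfun (Subgroup.inclusion hM'M (y M' hM')) = 0 := by
    rw [hsub]
    have : Multiplicative.ofAdd (ψfun ⟨(↑(y M' hM') : G), hg⟩) = 1 := h1
    simpa using this
  rw [hzero] at heq
  exact hf (heq.symm)
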